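/- Let R be a finite type of rows and C a finite type of columns, and let S : R → C → Prop be a sparsity pattern. There exists a real matrix A : Matrix R C ℝ supported on S (i.e., A r c ≠ 0 implies S r c) whose rank equals the cardinality of C if and only if there exists an injective function f : C → R such that S (f c) c holds for every column c. (In words: a sparsity pattern has full generic column rank if and only if its bipartite graph admits a perfect matching from the column nodes to the row nodes.) -/

import Mathlib

/-- A matrix `A` is supported on the sparsity pattern `S` if every nonzero
entry `A r c` satisfies `S r c`. -/
def SupportedOn {R C : Type*} (S : R → C → Prop) (A : Matrix R C ℝ) : Prop :=
  ∀ r c, A r c ≠ 0 → S r c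

open Matrix in
/-- A sparsity pattern has full generic column rank iff its bipartite graph
admits a perfect matching from columns to rows. -/
theorem generic_full_column_rank_iff_matching
    {R C : Type*} [Fintype R] [Fintype C] (S : R → C → Prop) :
    (∃ A : Matrix R C ℝ, SupportedOn S A ∧ A.rank = Fintype.card C) ↔
      (∃ f : C → R, Function.Injective f ∧ ∀ c, S (f c) c) := by
  classical
  constructor
  · rintro ⟨A, hsupp, hrank⟩
    -- columns of A are linearly independent
    have hli : LinearIndependent ℝ Aᵀ := by
      have h : LinearIndependent ℝ A.col := by
        rw [linearIndependent_iff_card_eq_finrank_span, Set.finrank,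
          ← A.rank_eq_finrank_span_cols, hrank]
      exact h
    -- neighborhoods
    set t : C → Finset R := fun c => Finset.univ.filter (fun r => S r c) with ht
    have hall : ∀ s : Finset C, s.card ≤ (s.biUnion t).card := by
      intro s
      set N : Finset R := s.biUnion t with hN
      -- the submodule of functions vanishing outside N
      let U : Submodule ℝ (R → ℝ) :=
        { carrier := {x | ∀ r, r ∉ N → x r = 0}
          add_mem' := fun hx hy r hr => by simp [hx r hr, hy r hr]
          zero_mem' := fun r _ => rfl
          smul_mem' := fun a x hx r hr => by simp [hx r hr] }
      -- columns indexed by s lie in U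
      have hmem : ∀ c : s, Aᵀ (c : C) ∈ U := by
        rintro ⟨c, hc⟩ r hr
        by_contra h
        apply hr
        rw [hN]
        exact Finset.mem_biUnion.2 ⟨c, hc, by simp [ht, hsupp r c h]⟩
      -- restriction map to coordinates in N
      let L : (R → ℝ) →ₗ[ℝ] ({r // r ∈ N} → ℝ) :=
        LinearMap.funLeft ℝ ℝ (fun r : {r // r ∈ N} => (r : R))
      have hli_s : LinearIndependent ℝ (fun c : s => Aᵀ (c : C)) :=
        hli.comp _ Subtype.val_injective
      have hdisj : Disjoint (Submodule.span ℝ (Set.range fun c : s => Aᵀ (c : C)))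
          (LinearMap.ker L) := by
        rw [Submodule.disjoint_def]
        intro x hx hker
        have hxU : x ∈ U := by
          refine Submodule.span_le.2 ?_ hx
          rintro _ ⟨c, rfl⟩
          exact hmem c
        funext r
        by_cases hr : r ∈ N
        · have : L x = 0 := hker
          have := congrFun this ⟨r, hr⟩
          simpa [L, LinearMap.funLeft] using this
        · exact hxU r hr
      have hli2 : LinearIndependent ℝ (fun c : s => L (Aᵀ (c : C))) :=
        hli_s.map hdisj
      calc s.card = Fintype.card s := (Fintype.card_coe s).symm
        _ ≤ Module.finrank ℝ ({r // r ∈ N} → ℝ) := hli2.fintype_card_le_finrank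
        _ = Fintype.card {r // r ∈ N} := by simp
        _ = N.card := Fintype.card_coe N
    obtain ⟨f, hf, hft⟩ := (Finset.all_card_le_biUnion_card_iff_exists_injective t).1 hall
    exact ⟨f, hf, fun c => by simpa [ht] using hft c⟩
  · rintro ⟨f, hf, hfS⟩
    refine ⟨fun r c => if f c = r then 1 else 0, ?_, ?_⟩
    · intro r c h
      have : f c = r := by by_contra h'; simp [h'] at h
      exact this ▸ hfS c
    · set A : Matrix R C ℝ := fun r c => if f c = r then 1 else 0 with hA
      have hmul : Aᵀ * A = 1 := by
        ext c c'
        simp only [Matrix.mul_apply, Matrix.transpose_apply]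
        simp only [hA]
        by_cases h : c = c'
        · subst h
          rw [Finset.sum_eq_single (f c)] <;> simp +contextual [eq_comm]
        · have : f c ≠ f c' := fun he => h (hf he)
          rw [Finset.sum_eq_zero]
          · simp [Matrix.one_apply_ne h]
          · intro r _
            rcases eq_or_ne (f c) r with rfl | hr
            · simp [this, this.symm]
            · simp [hr]
      refine le_antisymm A.rank_le_card_width ?_
      calc Fintype.card C = (1 : Matrix C C ℝ).rank := Matrix.rank_one.symm
        _ = (Aᵀ * A).rank := by rw [hmul]
        _ ≤ A.rank := Matrix.rank_mul_le_right _ _
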